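/- Let G and G' be finite abelian groups, ψ ∈ Aut(G), ψ' ∈ Aut(G'), ρ = id_G − ψ and ρ' = id_{G'} − ψ' (as endomorphisms, x ↦ x − ψ(x)). Then the generalized Alexander quandles Q(G,ψ) and Q(G',ψ') are isomorphic as quandles if and only if |G| = |G'| and there exists a group isomorphism h : Im ρ → Im ρ' with h ∘ ψ|_{Im ρ} = ψ'|_{Im ρ'} ∘ h. -/

import Mathlib

open Function Set QuotientAddGroup

private lemma aqa_equiv_of_card {α β : Type*} [Finite α] [Finite β]
    (h : Nat.card α = Nat.card β) : Nonempty (α ≃ β) := by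
  have := Fintype.ofFinite α
  have := Fintype.ofFinite β
  rw [Nat.card_eq_fintype_card, Nat.card_eq_fintype_card] at h
  exact ⟨Fintype.equivOfCardEq h⟩

private def aqaFiberEquivKer {A C : Type*} [AddGroup A] [AddGroup C] (s : A →+ C) (a₀ : A) :
    {a // s a = s a₀} ≃ s.ker where
  toFun a := ⟨a.1 - a₀, by
    have h := a.2
    simp [AddMonoidHom.mem_ker, map_sub, h]⟩
  invFun k := ⟨(k : A) + a₀, by
    have h := k.2
    rw [AddMonoidHom.mem_ker] at h
    simp [map_add, h]⟩
  left_inv a := by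
    apply Subtype.ext
    simp
  right_inv k := by
    apply Subtype.ext
    simp

private lemma aqa_exists_compat_bij {A B C : Type*} [AddGroup A] [AddGroup B] [AddGroup C]
    [Finite A] [Finite B] [Finite C] (s : A →+ C) (t : B →+ C)
    (hrange : s.range = t.range) (hcard : Nat.card A = Nat.card B) :
    ∃ β : A ≃ B, ∀ a, t (β a) = s a := by
  have hker : Nat.card s.ker = Nat.card t.ker := by
    have hA := AddSubgroup.card_eq_card_quotient_mul_card_addSubgroup s.ker
    have hB := AddSubgroup.card_eq_card_quotient_mul_card_addSubgroup t.ker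
    have eA : Nat.card (A ⧸ s.ker) = Nat.card s.range :=
      Nat.card_congr (QuotientAddGroup.quotientKerEquivRange s).toEquiv
    have eB : Nat.card (B ⧸ t.ker) = Nat.card t.range :=
      Nat.card_congr (QuotientAddGroup.quotientKerEquivRange t).toEquiv
    have hrpos : 0 < Nat.card s.range := Nat.card_pos
    rw [hA, eA] at hcard
    rw [hB, eB, ← hrange] at hcard
    exact Nat.eq_of_mul_eq_mul_left hrpos hcard
  have hfib : ∀ c : C, Nonempty ({a // s a = c} ≃ {b // t b = c}) := by
    intro c
    by_cases hc : ∃ a, s a = c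
    · obtain ⟨a₀, rfl⟩ := hc
      have hc' : (s a₀) ∈ t.range := by rw [← hrange]; exact ⟨a₀, rfl⟩
      obtain ⟨b₀, hb₀⟩ := hc'
      obtain ⟨e⟩ := aqa_equiv_of_card hker
      exact ⟨((aqaFiberEquivKer s a₀).trans e).trans
        ((aqaFiberEquivKer t b₀).symm.trans
          (Equiv.subtypeEquivRight (fun b => by rw [hb₀])))⟩
    · have h1 : IsEmpty {a // s a = c} := ⟨fun a => hc ⟨a.1, a.2⟩⟩
      have h2 : IsEmpty {b // t b = c} := by
        refine ⟨fun b => hc ?_⟩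
        have hm : c ∈ t.range := ⟨b.1, b.2⟩
        rw [← hrange] at hm
        exact hm
      exact ⟨Equiv.equivOfIsEmpty _ _⟩
  exact ⟨Equiv.ofFiberEquiv fun c => (hfib c).some, fun a => Equiv.ofFiberEquiv_map _ a⟩

/-- Nelson's theorem: for finite abelian groups `G, G'` with automorphisms `ψ, ψ'`, and
`ρ = id − ψ`, `ρ' = id − ψ'`, the Alexander quandles `Q(G, ψ)` and `Q(G', ψ')`
(with `s_x(y) = x + ψ(y − x)`) are isomorphic as quandles iff `|G| = |G'|` and there is a
group isomorphism `h : Im ρ → Im ρ'` with `h ∘ ψ|_{Im ρ} = ψ'|_{Im ρ'} ∘ h`. -/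
theorem alexander_quandle_iso_iff {G G' : Type*} [AddCommGroup G] [AddCommGroup G']
    [Finite G] [Finite G'] (ψ : G ≃+ G) (ψ' : G' ≃+ G') :
    (∃ f : G → G', Function.Bijective f ∧
      ∀ x y : G, f (x + ψ (y - x)) = f x + ψ' (f y - f x)) ↔
    (Nat.card G = Nat.card G' ∧
      ∃ h : G → G',
        Set.BijOn h (Set.range (fun x : G => x - ψ x))
          (Set.range (fun x : G' => x - ψ' x)) ∧
        (∀ x ∈ Set.range (fun x : G => x - ψ x),
          ∀ y ∈ Set.range (fun x : G => x - ψ x), h (x + y) = h x + h y) ∧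
        (∀ x ∈ Set.range (fun x : G => x - ψ x), h (ψ x) = ψ' (h x))) := by
  constructor
  · rintro ⟨f, hf, hq⟩
    set g : G → G' := fun y => f y - f 0 with hg
    have hgbij : Function.Bijective g := by
      have he : g = (Equiv.subRight (f 0)) ∘ f := rfl
      rw [he]
      exact (Equiv.subRight (f 0)).bijective.comp hf
    have hgq : ∀ x y, g (x + ψ (y - x)) = g x + ψ' (g y - g x) := by
      intro x y
      have e : (f y - f 0) - (f x - f 0) = f y - f x := by abel
      simp only [hg]
      rw [e, hq x y]
      abel
    have hg0 : g 0 = 0 := by simp [hg]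
    have hpsi : ∀ w, g (ψ w) = ψ' (g w) := by
      intro w
      have h1 := hgq 0 w
      simpa [hg0] using h1
    have hkey : ∀ z x, g (z + (x - ψ x)) = g z + (g x - ψ' (g x)) := by
      intro z x
      have h1 := hgq x (ψ.symm z)
      have e1 : x + ψ (ψ.symm z - x) = z + (x - ψ x) := by
        rw [map_sub, ψ.apply_symm_apply]; abel
      have e2 : ψ' (g (ψ.symm z)) = g z := by
        rw [← hpsi, ψ.apply_symm_apply]
      rw [e1, map_sub, e2] at h1
      rw [h1]; abel
    have hrho : ∀ a, g (a - ψ a) = g a - ψ' (g a) := by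
      intro a
      have h1 := hkey 0 a
      simpa [hg0] using h1
    refine ⟨Nat.card_eq_of_bijective f hf, g, ⟨?_, ?_, ?_⟩, ?_, ?_⟩
    · rintro x ⟨a, rfl⟩
      exact ⟨g a, (hrho a).symm⟩
    · exact hgbij.injective.injOn
    · rintro w ⟨b, rfl⟩
      obtain ⟨a, ha⟩ := hgbij.surjective b
      exact ⟨a - ψ a, ⟨a, rfl⟩, by simp only []; rw [hrho a, ha]⟩
    · rintro x ⟨a, rfl⟩ y ⟨b, rfl⟩
      simp only []
      rw [hkey (a - ψ a) b, hrho b]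
    · rintro x ⟨a, rfl⟩
      exact hpsi _
  · rintro ⟨hcard, h, hbij, hadd, hcomm⟩
    have hψadd : ∀ a b : G, (a + b) - ψ (a + b) = (a - ψ a) + (b - ψ b) := by
      intro a b; rw [map_add]; abel
    have hψ'add : ∀ a b : G', (a + b) - ψ' (a + b) = (a - ψ' a) + (b - ψ' b) := by
      intro a b; rw [map_add]; abel
    set S : Set G := Set.range (fun x : G => x - ψ x) with hSdef
    set S' : Set G' := Set.range (fun x : G' => x - ψ' x) with hS'def
    have h0S : (0:G) ∈ S := ⟨0, by simp⟩
    have h0S' : (0:G') ∈ S' := ⟨0, by simp⟩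
    have haddS : ∀ a ∈ S, ∀ b ∈ S, a + b ∈ S := by
      rintro _ ⟨a, rfl⟩ _ ⟨b, rfl⟩
      exact ⟨a + b, hψadd a b⟩
    have hnegS : ∀ a ∈ S, -a ∈ S := by
      rintro _ ⟨a, rfl⟩
      exact ⟨-a, by simp only [map_neg]; abel⟩
    have haddS' : ∀ a ∈ S', ∀ b ∈ S', a + b ∈ S' := by
      rintro _ ⟨a, rfl⟩ _ ⟨b, rfl⟩
      exact ⟨a + b, hψ'add a b⟩
    have hnegS' : ∀ a ∈ S', -a ∈ S' := by
      rintro _ ⟨a, rfl⟩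
      exact ⟨-a, by simp only [map_neg]; abel⟩
    have hpsiS : ∀ a ∈ S, ψ a ∈ S := by
      rintro _ ⟨a, rfl⟩
      exact ⟨ψ a, by simp only [map_sub]⟩
    have h0 : h 0 = 0 := by
      have h1 := hadd 0 h0S 0 h0S
      rw [add_zero] at h1
      exact (add_eq_left.mp h1.symm)
    have hneg : ∀ a ∈ S, h (-a) = - h a := by
      intro a ha
      have h1 := hadd a ha (-a) (hnegS a ha)
      rw [add_neg_cancel, h0] at h1
      rw [eq_neg_iff_add_eq_zero, add_comm]
      exact h1.symm
    have hsub : ∀ a ∈ S, ∀ b ∈ S, h (a - b) = h a - h b := by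
      intro a ha b hb
      rw [sub_eq_add_neg, sub_eq_add_neg, hadd a ha (-b) (hnegS b hb), hneg b hb]
    have hmemS' : ∀ a ∈ S, h a ∈ S' := fun a ha => hbij.1 ha
    have hrho : ∀ a ∈ S, h (a - ψ a) = h a - ψ' (h a) := by
      intro a ha
      rw [hsub a ha (ψ a) (hpsiS a ha), hcomm a ha]
    -- subgroups
    let R : AddSubgroup G :=
      { carrier := S
        add_mem' := fun {a b} ha hb => haddS a ha b hb
        zero_mem' := h0S
        neg_mem' := fun {a} ha => hnegS a ha }
    let R' : AddSubgroup G' :=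
      { carrier := S'
        add_mem' := fun {a b} ha hb => haddS' a ha b hb
        zero_mem' := h0S'
        neg_mem' := fun {a} ha => hnegS' a ha }
    let ρ'hom : G' →+ G' := AddMonoidHom.mk' (fun x => x - ψ' x) hψ'add
    let R2' : AddSubgroup G' := AddSubgroup.map ρ'hom R'
    -- σ and the induced maps on quotients
    have hσadd : ∀ a b : G, h ((a + b) - ψ (a + b)) = h (a - ψ a) + h (b - ψ b) := by
      intro a b
      rw [hψadd a b]
      exact hadd _ ⟨a, rfl⟩ _ ⟨b, rfl⟩
    let σ : G →+ G' := AddMonoidHom.mk' (fun x => h (x - ψ x)) hσadd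
    let s : G ⧸ R →+ G' ⧸ R2' := QuotientAddGroup.lift R ((QuotientAddGroup.mk' R2').comp σ)
      (by
        intro x hx
        rw [AddMonoidHom.mem_ker]
        show (QuotientAddGroup.mk (h (x - ψ x)) : G' ⧸ R2') = 0
        rw [QuotientAddGroup.eq_zero_iff]
        rw [hrho x hx]
        exact ⟨h x, hmemS' x hx, rfl⟩)
    let t : G' ⧸ R' →+ G' ⧸ R2' := QuotientAddGroup.lift R' ((QuotientAddGroup.mk' R2').comp ρ'hom)
      (by
        intro x hx
        rw [AddMonoidHom.mem_ker]
        show (QuotientAddGroup.mk (x - ψ' x) : G' ⧸ R2') = 0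
        rw [QuotientAddGroup.eq_zero_iff]
        exact ⟨x, hx, rfl⟩)
    have hs_mk : ∀ x : G, s (QuotientAddGroup.mk x) = QuotientAddGroup.mk (h (x - ψ x)) :=
      fun x => rfl
    have ht_mk : ∀ x : G', t (QuotientAddGroup.mk x) = QuotientAddGroup.mk (x - ψ' x) :=
      fun x => rfl
    have hrange : s.range = t.range := by
      ext c
      constructor
      · rintro ⟨qa, rfl⟩
        obtain ⟨x, rfl⟩ := QuotientAddGroup.mk_surjective qa
        have hx : h (x - ψ x) ∈ S' := hmemS' _ ⟨x, rfl⟩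
        obtain ⟨y, hy⟩ := hx
        have hy' : y - ψ' y = h (x - ψ x) := hy
        exact ⟨QuotientAddGroup.mk y, by rw [ht_mk, hs_mk, hy']⟩
      · rintro ⟨qb, rfl⟩
        obtain ⟨y, rfl⟩ := QuotientAddGroup.mk_surjective qb
        have hy : y - ψ' y ∈ S' := ⟨y, rfl⟩
        obtain ⟨a, ha, h2⟩ := hbij.2.2 hy
        obtain ⟨x, hx⟩ := ha
        have hx' : x - ψ x = a := hx
        exact ⟨QuotientAddGroup.mk x, by rw [hs_mk, ht_mk, ← h2, hx']⟩
    have hRR' : Nat.card R = Nat.card R' := by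
      have e1 : Nat.card R = Nat.card S := rfl
      have e2 : Nat.card R' = Nat.card S' := rfl
      rw [e1, e2]
      exact Nat.card_congr (Set.BijOn.equiv h hbij)
    have hQAB : Nat.card (G ⧸ R) = Nat.card (G' ⧸ R') := by
      have h1 := AddSubgroup.card_eq_card_quotient_mul_card_addSubgroup R
      have h2 := AddSubgroup.card_eq_card_quotient_mul_card_addSubgroup R'
      have hpos : 0 < Nat.card R' := Nat.card_pos
      rw [h1, h2, hRR'] at hcard
      exact Nat.eq_of_mul_eq_mul_right hpos hcard
    obtain ⟨β, hβ⟩ := aqa_exists_compat_bij s t hrange hQAB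
    -- choose representatives
    have hv : ∀ p : G ⧸ R, ∃ w : G', (QuotientAddGroup.mk w : G' ⧸ R') = β p ∧
        w - ψ' w = h (p.out - ψ p.out) := by
      intro p
      have hβp := hβ p
      have e1 : t (β p) =
          QuotientAddGroup.mk ((β p).out - ψ' (β p).out) := by
        conv_lhs => rw [← QuotientAddGroup.out_eq' (β p)]
        rfl
      have e2 : s p = QuotientAddGroup.mk (h (p.out - ψ p.out)) := by
        conv_lhs => rw [← QuotientAddGroup.out_eq' p]
        rfl
      rw [e1, e2] at hβp
      rw [QuotientAddGroup.eq] at hβp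
      obtain ⟨z, hz, hz2⟩ := hβp
      refine ⟨(β p).out + z, ?_, ?_⟩
      · conv_rhs => rw [← QuotientAddGroup.out_eq' (β p)]
        rw [QuotientAddGroup.eq]
        have e : -((β p).out + z) + (β p).out = -z := by abel
        rw [e]
        exact neg_mem hz
      · have hz2' : z - ψ' z =
            -((β p).out - ψ' (β p).out) + h (p.out - ψ p.out) := hz2
        calc ((β p).out + z) - ψ' ((β p).out + z)
            = ((β p).out - ψ' (β p).out) + (z - ψ' z) := by rw [map_add]; abel
          _ = h (p.out - ψ p.out) := by rw [hz2']; abel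
    choose v hv1 hv2 using hv
    have hmem_out : ∀ x : G, x - (QuotientAddGroup.mk x : G ⧸ R).out ∈ S := by
      intro x
      have h1 : (QuotientAddGroup.mk ((QuotientAddGroup.mk x : G ⧸ R).out) : G ⧸ R)
          = QuotientAddGroup.mk x := QuotientAddGroup.out_eq' _
      rw [QuotientAddGroup.eq] at h1
      have e : x - (QuotientAddGroup.mk x : G ⧸ R).out
          = -((QuotientAddGroup.mk x : G ⧸ R).out) + x := by abel
      rw [e]
      exact h1
    set f : G → G' :=
      fun x => v (QuotientAddGroup.mk x) + h (x - (QuotientAddGroup.mk x : G ⧸ R).out)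
      with hfdef
    have hkeyf : ∀ x : G, f x - ψ' (f x) = h (x - ψ x) := by
      intro x
      set p : G ⧸ R := QuotientAddGroup.mk x with hp
      set r : G := p.out with hr
      have ha : x - r ∈ S := hmem_out x
      have e1 : f x = v p + h (x - r) := rfl
      calc f x - ψ' (f x)
          = (v p - ψ' (v p)) + (h (x - r) - ψ' (h (x - r))) := by rw [e1, map_add]; abel
        _ = h (r - ψ r) + h ((x - r) - ψ (x - r)) := by rw [hv2 p, ← hrho _ ha]
        _ = h ((r - ψ r) + ((x - r) - ψ (x - r))) := (hadd _ ⟨r, rfl⟩ _ ⟨x - r, rfl⟩).symm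
        _ = h (x - ψ x) := by
            congr 1
            rw [map_sub]
            abel
    have hmk_psi : ∀ y : G, (QuotientAddGroup.mk (ψ y) : G ⧸ R) = QuotientAddGroup.mk y := by
      intro y
      rw [QuotientAddGroup.eq]
      have e : -(ψ y) + y = y - ψ y := by abel
      rw [e]
      exact ⟨y, rfl⟩
    have hmkq : ∀ x y : G,
        (QuotientAddGroup.mk (x + ψ (y - x)) : G ⧸ R) = QuotientAddGroup.mk y := by
      intro x y
      have e : x + ψ (y - x) = ψ y + (x - ψ x) := by rw [map_sub]; abel
      rw [e]
      have h1 : (QuotientAddGroup.mk (ψ y + (x - ψ x)) : G ⧸ R) = QuotientAddGroup.mk (ψ y) := by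
        rw [QuotientAddGroup.eq]
        have e2 : -(ψ y + (x - ψ x)) + ψ y = -(x - ψ x) := by abel
        rw [e2]
        exact neg_mem ⟨x, rfl⟩
      rw [h1, hmk_psi]
    have hB : ∀ x y : G, f (x + ψ (y - x)) = ψ' (f y) + h (x - ψ x) := by
      intro x y
      set q : G ⧸ R := QuotientAddGroup.mk y with hq
      set r : G := q.out with hr
      have hb : y - r ∈ S := hmem_out y
      have hψb : ψ (y - r) ∈ S := hpsiS _ hb
      have e1 : f (x + ψ (y - x)) = v q + h (x + ψ (y - x) - r) := by
        show v (QuotientAddGroup.mk (x + ψ (y - x)))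
            + h (x + ψ (y - x) - (QuotientAddGroup.mk (x + ψ (y - x)) : G ⧸ R).out) = _
        rw [hmkq x y]
      have e2 : x + ψ (y - x) - r = ((x - ψ x) + ψ (y - r)) + -(r - ψ r) := by
        rw [map_sub, map_sub]; abel
      have e3 : h (x + ψ (y - x) - r)
          = (h (x - ψ x) + ψ' (h (y - r))) + -(v q - ψ' (v q)) := by
        rw [e2, hadd _ (haddS _ ⟨x, rfl⟩ _ hψb) _ (hnegS _ ⟨r, rfl⟩),
          hadd _ ⟨x, rfl⟩ _ hψb, hneg _ ⟨r, rfl⟩, hcomm _ hb, ← hv2 q]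
      have e4 : f y = v q + h (y - r) := rfl
      rw [e1, e3, e4, map_add]
      abel
    have hmor : ∀ x y : G, f (x + ψ (y - x)) = f x + ψ' (f y - f x) := by
      intro x y
      rw [hB x y, ← hkeyf x, map_sub]
      abel
    have hmkf : ∀ z : G, (QuotientAddGroup.mk (f z) : G' ⧸ R') = β (QuotientAddGroup.mk z) := by
      intro z
      have h1 : (QuotientAddGroup.mk (f z) : G' ⧸ R')
          = QuotientAddGroup.mk (v (QuotientAddGroup.mk z)) := by
        rw [QuotientAddGroup.eq]
        have e : -(f z) + v (QuotientAddGroup.mk z)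
            = -(h (z - (QuotientAddGroup.mk z : G ⧸ R).out)) := by
          rw [hfdef]
          beta_reduce
          abel_nf
        rw [e]
        exact neg_mem (hmemS' _ (hmem_out z))
      rw [h1, hv1]
    have hinj : Function.Injective f := by
      intro x y hxy
      have h1 : β (QuotientAddGroup.mk x) = β (QuotientAddGroup.mk y) := by
        rw [← hmkf, ← hmkf, hxy]
      have h2 : (QuotientAddGroup.mk x : G ⧸ R) = QuotientAddGroup.mk y := β.injective h1
      have hxy' : v (QuotientAddGroup.mk x) + h (x - (QuotientAddGroup.mk x : G ⧸ R).out)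
          = v (QuotientAddGroup.mk y) + h (y - (QuotientAddGroup.mk y : G ⧸ R).out) := hxy
      rw [h2] at hxy'
      have h5 := add_left_cancel hxy'
      have hma : x - (QuotientAddGroup.mk y : G ⧸ R).out ∈ S := h2 ▸ hmem_out x
      have h6 : x - (QuotientAddGroup.mk y : G ⧸ R).out
          = y - (QuotientAddGroup.mk y : G ⧸ R).out := hbij.2.1 hma (hmem_out y) h5
      exact sub_left_inj.mp h6
    have hsurj : Function.Surjective f := by
      intro y'
      set q : G ⧸ R := β.symm (QuotientAddGroup.mk y') with hqd
      have hq : β q = QuotientAddGroup.mk y' := β.apply_symm_apply _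
      have hmemv : y' - v q ∈ S' := by
        have h1 := hv1 q
        rw [hq, QuotientAddGroup.eq] at h1
        have e : y' - v q = -(v q) + y' := by abel
        rw [e]
        exact h1
      obtain ⟨a, ha, hha⟩ := hbij.2.2 hmemv
      refine ⟨q.out + a, ?_⟩
      have hmka : (QuotientAddGroup.mk (q.out + a) : G ⧸ R) = q := by
        have h1 : (QuotientAddGroup.mk (q.out + a) : G ⧸ R) = QuotientAddGroup.mk q.out := by
          rw [QuotientAddGroup.eq]
          have e : -(q.out + a) + q.out = -a := by abel
          rw [e]
          exact neg_mem ha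
        rw [h1, QuotientAddGroup.out_eq']
      have h1 : f (q.out + a) = v q + h (q.out + a - q.out) := by
        show v (QuotientAddGroup.mk (q.out + a))
            + h (q.out + a - (QuotientAddGroup.mk (q.out + a) : G ⧸ R).out) = _
        rw [hmka]
      rw [h1]
      have e : q.out + a - q.out = a := by abel
      rw [e, hha]
      abel
    exact ⟨f, ⟨hinj, hsurj⟩, hmor⟩
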